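/- Let m be a real number and let H, D : (0,1) → ℝ with H(r) > 0 for all r, H differentiable on (0,1) with H'(r) = ((m−1)/r)·H(r) + 2·D(r) for all r ∈ (0,1), and set I(r) := r·D(r)/H(r). Then: (i) the function r ↦ log(H(r)/r^{m−1}) is differentiable on (0,1) with derivative at s equal to 2·I(s)/s; (ii) if moreover I is nondecreasing on (0,1), then for all 0 < r ≤ t < 1 one has (r/t)^{2I(t)} · H(t)/t^{m−1} ≤ H(r)/r^{m−1} ≤ (r/t)^{2I(r)} · H(t)/t^{m−1}. -/

import Mathlib

/-- Consequences of the outer-variation identity `H' = ((m-1)/r)H + 2D`: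
(i) `log(H(r)/r^{m-1})` has derivative `2 I(s)/s` at every `s ∈ (0,1)`, where
`I(r) = r·D(r)/H(r)`; (ii) if moreover `I` is nondecreasing on `(0,1)`, then for
`0 < r ≤ t < 1`,
`(r/t)^{2I(t)} · H(t)/t^{m-1} ≤ H(r)/r^{m-1} ≤ (r/t)^{2I(r)} · H(t)/t^{m-1}`. -/
theorem log_height_derivative_and_doubling (m : ℝ) (H D : ℝ → ℝ)
    (hH : ∀ r ∈ Set.Ioo (0 : ℝ) 1, 0 < H r)
    (hH' : ∀ r ∈ Set.Ioo (0 : ℝ) 1, HasDerivAt H ((m - 1) / r * H r + 2 * D r) r)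
    (I : ℝ → ℝ) (hI : ∀ r, I r = r * D r / H r) :
    (∀ s ∈ Set.Ioo (0 : ℝ) 1,
      HasDerivAt (fun r : ℝ => Real.log (H r / r ^ (m - 1))) (2 * I s / s) s) ∧
    (MonotoneOn I (Set.Ioo 0 1) →
      ∀ r t : ℝ, 0 < r → r ≤ t → t < 1 →
        (r / t) ^ (2 * I t) * (H t / t ^ (m - 1)) ≤ H r / r ^ (m - 1) ∧
        H r / r ^ (m - 1) ≤ (r / t) ^ (2 * I r) * (H t / t ^ (m - 1))) := by
  set f : ℝ → ℝ := fun r : ℝ => Real.log (H r / r ^ (m - 1)) with hf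
  have hfd : ∀ s ∈ Set.Ioo (0 : ℝ) 1, HasDerivAt f (2 * I s / s) s := by
    intro s hs
    have hs0 : (0 : ℝ) < s := hs.1
    have hHs : 0 < H s := hH s hs
    have hg : HasDerivAt (fun r : ℝ => Real.log (H r) - (m - 1) * Real.log r)
        (2 * I s / s) s := by
      have h1 := (hH' s hs).log hHs.ne'
      have h2 := (Real.hasDerivAt_log hs0.ne').const_mul (m - 1)
      have h3 := h1.sub h2
      refine h3.congr_deriv ?_
      rw [hI]
      field_simp
      ring
    apply hg.congr_of_eventuallyEq
    filter_upwards [isOpen_Ioo.mem_nhds hs] with x hx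
    show Real.log (H x / x ^ (m - 1)) = _
    rw [Real.log_div (hH x hx).ne' (Real.rpow_pos_of_pos hx.1 _).ne',
      Real.log_rpow hx.1]
  refine ⟨hfd, ?_⟩
  intro hmono r t hr hrt ht1
  have ht : (0 : ℝ) < t := hr.trans_le hrt
  have hr1 : r < 1 := lt_of_le_of_lt hrt ht1
  have hrmem : r ∈ Set.Ioo (0 : ℝ) 1 := ⟨hr, hr1⟩
  have htmem : t ∈ Set.Ioo (0 : ℝ) 1 := ⟨ht, ht1⟩
  have hsub : Set.Icc r t ⊆ Set.Ioo (0 : ℝ) 1 := fun x hx =>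
    ⟨hr.trans_le hx.1, lt_of_le_of_lt hx.2 ht1⟩
  -- helper derivative for φ_c x = f x - 2*c*log x
  have hφ : ∀ c : ℝ, ∀ x ∈ Set.Ioo (0 : ℝ) 1,
      HasDerivAt (fun x : ℝ => f x - 2 * c * Real.log x) (2 * I x / x - 2 * c / x) x := by
    intro c x hx
    have h1 := hfd x hx
    have h2 := (Real.hasDerivAt_log hx.1.ne').const_mul (2 * c)
    have h3 := h1.sub h2
    refine h3.congr_deriv ?_
    ring
  have hcont : ∀ c : ℝ, ContinuousOn (fun x : ℝ => f x - 2 * c * Real.log x) (Set.Icc r t) :=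
    fun c => ContinuousOn.mono
      (fun x hx => ((hφ c x hx).continuousAt.continuousWithinAt)) hsub
  have hintsub : interior (Set.Icc r t) ⊆ Set.Ioo (0 : ℝ) 1 := by
    rw [interior_Icc]; exact fun x hx => hsub ⟨hx.1.le, hx.2.le⟩
  -- lower bound: φ_{I t} is antitone on [r,t]
  have hlow : f t - 2 * I t * Real.log t ≤ f r - 2 * I t * Real.log r := by
    have := antitoneOn_of_hasDerivWithinAt_nonpos (convex_Icc r t) (hcont (I t))
      (f' := fun x => 2 * I x / x - 2 * I t / x)
      (fun x hx => ((hφ (I t) x (hintsub hx)).hasDerivWithinAt))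
      (fun x hx => by
        rw [interior_Icc] at hx
        have hx' := hintsub (by rw [interior_Icc]; exact hx)
        have hIx : I x ≤ I t := hmono hx' htmem (hx.2.le)
        have : 2 * I x / x ≤ 2 * I t / x := by gcongr; exact hx'.1.le
        linarith)
    exact this (Set.left_mem_Icc.2 hrt) (Set.right_mem_Icc.2 hrt) hrt
  -- upper bound: φ_{I r} is monotone on [r,t]
  have hup : f r - 2 * I r * Real.log r ≤ f t - 2 * I r * Real.log t := by
    have := monotoneOn_of_hasDerivWithinAt_nonneg (convex_Icc r t) (hcont (I r))
      (f' := fun x => 2 * I x / x - 2 * I r / x)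
      (fun x hx => ((hφ (I r) x (hintsub hx)).hasDerivWithinAt))
      (fun x hx => by
        rw [interior_Icc] at hx
        have hx' := hintsub (by rw [interior_Icc]; exact hx)
        have hIx : I r ≤ I x := hmono hrmem hx' (hx.1.le)
        have : 2 * I r / x ≤ 2 * I x / x := by gcongr; exact hx'.1.le
        linarith)
    exact this (Set.left_mem_Icc.2 hrt) (Set.right_mem_Icc.2 hrt) hrt
  have hQr : 0 < H r / r ^ (m - 1) := div_pos (hH r hrmem) (Real.rpow_pos_of_pos hr _)
  have hQt : 0 < H t / t ^ (m - 1) := div_pos (hH t htmem) (Real.rpow_pos_of_pos ht _)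
  have hefr : Real.exp (f r) = H r / r ^ (m - 1) := Real.exp_log hQr
  have heft : Real.exp (f t) = H t / t ^ (m - 1) := Real.exp_log hQt
  have hrt0 : 0 < r / t := div_pos hr ht
  have hpow : ∀ c : ℝ, (r / t) ^ (2 * c) * (H t / t ^ (m - 1))
      = Real.exp (f t + 2 * c * (Real.log r - Real.log t)) := by
    intro c
    rw [Real.exp_add, ← heft, Real.rpow_def_of_pos hrt0, Real.log_div hr.ne' ht.ne']
    ring_nf
  constructor
  · rw [hpow (I t), ← hefr]
    apply Real.exp_le_exp.2
    linarith
  · rw [hpow (I r), ← hefr]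
    apply Real.exp_le_exp.2
    linarith
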